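/- For the SCEM, the solution map N_E satisfies (id − P_{E,A}(B)) N_E(A+B) = N_E(A), and if ‖B‖ < min{c_A, c_ζ} then ‖P_{E,A}(B)‖_{L(H)} < 1 and N_E(A+B) = Σ_{k=0}^∞ P_{E,A}(B)^k N_E(A), with convergence in operator norm on L(ℂ^m_⋄, H). -/

import Mathlib

/- Statement 14: for the SCEM, `(id − P_{E,A}(B)) N_E(A+B) = N_E(A)`, and if
`‖B‖ < min{c_A,c_ζ}` then `‖P_{E,A}(B)‖ < 1` and
`N_E(A+B) = Σ_{k=0}^∞ P_{E,A}(B)^k N_E(A)` with convergence in operator norm on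
`L(ℂ^m_⋄, H)`.  `HE` stands for the quotient space `H`, `K` for `ℂ^m_⋄`,
`aE : coefficient → HE → HE → ℂ` for the family of SCEM forms `a_C` (whose
`C`-dependent part is `⟨·,·⟩_C`, so that `a_{A+B} = a_A + ⟨·,·⟩_B`), `b` for the
family `⟨·,·⟩_C`, `Vmap` for the electrode-voltage component map, and
`coeffNorm μ B` for `‖B‖ = ess sup ‖B(x)‖₂`.  `N_E(C) I` is the unique solution
of `a_C[N_E(C)I, (v,V)] = I·conj V = ⟪Vmap (v,V), I⟫`, and `P_{E,A}(B)` is given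
by `a_A[P_{E,A}(B)y, v] = −⟨y,v⟩_B`. -/

open MeasureTheory Matrix

noncomputable section

def specNorm {d : ℕ} (M : Matrix (Fin d) (Fin d) ℂ) : ℝ :=
  ‖(Matrix.toEuclideanCLM (𝕜 := ℂ) M :
      EuclideanSpace ℂ (Fin d) →L[ℂ] EuclideanSpace ℂ (Fin d))‖

def coeffNorm {d : ℕ} (μ : Measure (EuclideanSpace ℝ (Fin d)))
    (B : EuclideanSpace ℝ (Fin d) → Matrix (Fin d) (Fin d) ℂ) : ℝ :=
  essSup (fun x => specNorm (B x)) μ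

theorem stmt14 {d : ℕ} (μ : Measure (EuclideanSpace ℝ (Fin d)))
    {HE K : Type*} [NormedAddCommGroup HE] [InnerProductSpace ℂ HE] [CompleteSpace HE]
    [NormedAddCommGroup K] [InnerProductSpace ℂ K] [CompleteSpace K]
    (Vmap : HE →L[ℂ] K)
    (aE : (EuclideanSpace ℝ (Fin d) → Matrix (Fin d) (Fin d) ℂ) → HE → HE → ℂ)
    (b : (EuclideanSpace ℝ (Fin d) → Matrix (Fin d) (Fin d) ℂ) → HE → HE → ℂ)
    (A B : EuclideanSpace ℝ (Fin d) → Matrix (Fin d) (Fin d) ℂ) (cA cζ : ℝ)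
    (hsub1 : ∀ D (w w' v : HE), aE D (w - w') v = aE D w v - aE D w' v)
    -- `a_{A+B} = a_A + ⟨·,·⟩_B`: the admittance part is unchanged
    (hcoefadd : ∀ w v, aE (A + B) w v = aE A w v + b B w v)
    (hBbdd : ∀ w v, ‖b B w v‖ ≤ coeffNorm μ B * ‖w‖ * ‖v‖)
    (hcA : 0 < cA) (hcζ : 0 < cζ)
    (hAcoer : ∀ v : HE, min cA cζ * ‖v‖ ^ 2 ≤ (aE A v v).re)
    (hApBcoer : ∀ v : HE,
      (min cA cζ - coeffNorm μ B) * ‖v‖ ^ 2 ≤ (aE (A + B) v v).re)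
    (hB : coeffNorm μ B < min cA cζ) (hB0 : 0 ≤ coeffNorm μ B)
    (NA NApB : K →L[ℂ] HE) (PAB : HE →L[ℂ] HE)
    (hNA : ∀ (I : K) (v : HE), aE A (NA I) v = (inner ℂ (Vmap v) I : ℂ))
    (hNApB : ∀ (I : K) (v : HE), aE (A + B) (NApB I) v = (inner ℂ (Vmap v) I : ℂ))
    (hPAB : ∀ y v, aE A (PAB y) v = -b B y v)
    (hPABle : ‖PAB‖ ≤ coeffNorm μ B / min cA cζ) :
    (ContinuousLinearMap.id ℂ HE - PAB).comp NApB = NA ∧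
    ‖PAB‖ < 1 ∧
    Summable (fun k : ℕ => (PAB ^ k).comp NA) ∧
    NApB = ∑' k : ℕ, (PAB ^ k).comp NA := by
  have hPne : 0 < min cA cζ := lt_min hcA hcζ
  -- part 1
  have h1 : (ContinuousLinearMap.id ℂ HE - PAB).comp NApB = NA := by
    ext I
    simp only [ContinuousLinearMap.comp_apply, ContinuousLinearMap.sub_apply,
      ContinuousLinearMap.id_apply]
    set w : HE := (NApB I - PAB (NApB I)) - NA I with hw
    have key : aE A w w = 0 := by
      have h2 : aE A (NApB I - PAB (NApB I)) w = aE (A + B) (NApB I) w := by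
        rw [hsub1, hPAB, hcoefadd]; ring
      rw [hw, hsub1, h2, hNApB, ← hw, hNA, sub_self]
    have hco := hAcoer w
    rw [key] at hco
    simp only [Complex.zero_re] at hco
    have hw0 : ‖w‖ = 0 := by
      by_contra h
      have hp : 0 < ‖w‖ ^ 2 := by positivity
      nlinarith
    exact sub_eq_zero.mp (norm_eq_zero.mp hw0)
  -- part 2
  have h2 : ‖PAB‖ < 1 :=
    lt_of_le_of_lt hPABle ((div_lt_one hPne).mpr hB)
  -- part 3
  have hsumP : Summable (fun k : ℕ => PAB ^ k) :=
    summable_geometric_of_norm_lt_one h2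
  let Φ : (HE →L[ℂ] HE) →L[ℂ] (K →L[ℂ] HE) :=
    (ContinuousLinearMap.compL ℂ K HE HE).flip NA
  have hΦ : ∀ T : HE →L[ℂ] HE, Φ T = T.comp NA := fun T => rfl
  have h3 : Summable (fun k : ℕ => (PAB ^ k).comp NA) := by
    have := hsumP.map Φ.toLinearMap Φ.continuous
    exact this
  refine ⟨h1, h2, h3, ?_⟩
  -- part 4
  have hgeom : (∑' k : ℕ, PAB ^ k) * (1 - PAB) = 1 := geom_series_mul_neg PAB h2
  have hΦtsum : (∑' k : ℕ, PAB ^ k).comp NA = ∑' k : ℕ, (PAB ^ k).comp NA := by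
    rw [← hΦ]
    rw [Φ.map_tsum hsumP]
    exact tsum_congr fun k => hΦ _
  calc NApB = (ContinuousLinearMap.id ℂ (K →L[ℂ] HE)) NApB := rfl
    _ = ((1 : HE →L[ℂ] HE).comp NApB) := by
        simp [ContinuousLinearMap.one_def]
    _ = ((∑' k : ℕ, PAB ^ k) * (1 - PAB)).comp NApB := by rw [hgeom]
    _ = (∑' k : ℕ, PAB ^ k).comp ((1 - PAB).comp NApB) := by
        rw [ContinuousLinearMap.mul_def, ContinuousLinearMap.comp_assoc]
    _ = (∑' k : ℕ, PAB ^ k).comp NA := by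
        rw [show (1 - PAB : HE →L[ℂ] HE) = ContinuousLinearMap.id ℂ HE - PAB from by
          rw [ContinuousLinearMap.one_def], h1]
    _ = ∑' k : ℕ, (PAB ^ k).comp NA := hΦtsum

end
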